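/- Suppose a₁, a₂, a₃, a₄ ∈ ℂ satisfy aᵢ + aⱼ ≠ 0 and aᵢ − aⱼ ≠ 0 for all i ≠ j (equivalently the squares aᵢ² are pairwise distinct). Let σ'₁, σ'₂, σ'₃ be the elementary symmetric functions of a₁², a₂², a₃², a₄² of degrees 1, 2, 3, let p = a₁a₂a₃a₄, and let F(w,x,y,z) = w x² − z y² + z³ + σ'₁ z² w + σ'₂ z w² + σ'₃ w³ − 2 p y w². Then F is a nonsingular cubic form: if (w,x,y,z) ∈ ℂ⁴ satisfies ∂F/∂w = ∂F/∂x = ∂F/∂y = ∂F/∂z = 0 at (w,x,y,z), then (w,x,y,z) = (0,0,0,0). In particular the projective cubic surface F = 0 in ℙ³ is smooth. -/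

import Mathlib

private lemma deriv_cubic' (c0 c1 c2 c3 t : ℂ) :
    deriv (fun s : ℂ => c0 + c1 * s + c2 * s ^ 2 + c3 * s ^ 3) t
      = c1 + 2 * c2 * t + 3 * c3 * t ^ 2 := by
  have h1 : HasDerivAt (fun s : ℂ => s) 1 t := hasDerivAt_id t
  have h2 : HasDerivAt (fun s : ℂ => s ^ 2) (2 * t) t := by
    simpa using hasDerivAt_pow 2 t
  have h3 : HasDerivAt (fun s : ℂ => s ^ 3) (3 * t ^ 2) t := by
    simpa using hasDerivAt_pow 3 t
  have H : HasDerivAt (fun s : ℂ => c0 + c1 * s + c2 * s ^ 2 + c3 * s ^ 3)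
      (c1 + 2 * c2 * t + 3 * c3 * t ^ 2) t := by
    have := (((hasDerivAt_const t c0).add (h1.const_mul c1)).add
      (h2.const_mul c2)).add (h3.const_mul c3)
    exact this.congr_deriv (by ring)
  exact H.deriv

private lemma d4_aux (a b c d σ'₁ σ'₂ σ'₃ p w y z : ℂ)
    (hσ₁ : σ'₁ = a ^ 2 + b ^ 2 + c ^ 2 + d ^ 2)
    (hσ₂ : σ'₂ = a ^ 2 * b ^ 2 + a ^ 2 * c ^ 2 + a ^ 2 * d ^ 2
      + b ^ 2 * c ^ 2 + b ^ 2 * d ^ 2 + c ^ 2 * d ^ 2)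
    (hσ₃ : σ'₃ = a ^ 2 * b ^ 2 * c ^ 2 + a ^ 2 * b ^ 2 * d ^ 2
      + a ^ 2 * c ^ 2 * d ^ 2 + b ^ 2 * c ^ 2 * d ^ 2)
    (hp : p = a * b * c * d)
    (hw : w ≠ 0)
    (hzz : z = -(a ^ 2 * w))
    (hne : (b ^ 2 - a ^ 2) * ((c ^ 2 - a ^ 2) * (d ^ 2 - a ^ 2)) ≠ 0)
    (E1 : σ'₁ * z ^ 2 + 2 * σ'₂ * z * w + 3 * σ'₃ * w ^ 2 - 4 * p * y * w = 0)
    (E3 : z * y + p * w ^ 2 = 0)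
    (E4 : -y ^ 2 + 3 * z ^ 2 + 2 * σ'₁ * z * w + σ'₂ * w ^ 2 = 0) : False := by
  subst hσ₁ hσ₂ hσ₃ hp hzz
  have A : w * (a * b * c * d * w - a ^ 2 * y) = 0 := by linear_combination E3
  have A2 : a ^ 2 * y - a * b * c * d * w = 0 := by
    rcases mul_eq_zero.mp A with h | h
    · exact absurd h hw
    · linear_combination -h
  have T0 : a ^ 2 * ((b ^ 2 - a ^ 2) * ((c ^ 2 - a ^ 2) * (d ^ 2 - a ^ 2))) * w ^ 2 = 0 := by
    linear_combination (a ^ 2 / 3) * E1 - (4 * a ^ 4 / 3) * E4 - (4 * a ^ 2 * y / 3) * A2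
  have haz : a = 0 := by
    rcases mul_eq_zero.mp T0 with h | h
    · rcases mul_eq_zero.mp h with h' | h'
      · exact pow_eq_zero_iff two_ne_zero |>.mp h'
      · exact absurd h' hne
    · exact absurd (pow_eq_zero_iff two_ne_zero |>.mp h) hw
  subst haz
  have hbcd : (b ^ 2 * (c ^ 2 * d ^ 2)) * w ^ 2 = 0 := by linear_combination E1 / 3
  rcases mul_eq_zero.mp hbcd with h | h
  · exact hne (by linear_combination h)
  · exact hw (pow_eq_zero_iff two_ne_zero |>.mp h)

/-- The projective completion of the D₄ surface of the versal deformation is a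
nonsingular cubic surface: if all four partial derivatives of the cubic form `F`
vanish at `(w,x,y,z) ∈ ℂ⁴`, then `(w,x,y,z) = (0,0,0,0)`. -/
theorem d4_cubic_form_nonsingular (a₁ a₂ a₃ a₄ : ℂ)
    (ha : ∀ i j : Fin 4, i ≠ j →
      ![a₁, a₂, a₃, a₄] i + ![a₁, a₂, a₃, a₄] j ≠ 0 ∧
      ![a₁, a₂, a₃, a₄] i - ![a₁, a₂, a₃, a₄] j ≠ 0)
    (σ'₁ σ'₂ σ'₃ p : ℂ)
    (hσ₁ : σ'₁ = a₁ ^ 2 + a₂ ^ 2 + a₃ ^ 2 + a₄ ^ 2)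
    (hσ₂ : σ'₂ = a₁ ^ 2 * a₂ ^ 2 + a₁ ^ 2 * a₃ ^ 2 + a₁ ^ 2 * a₄ ^ 2
      + a₂ ^ 2 * a₃ ^ 2 + a₂ ^ 2 * a₄ ^ 2 + a₃ ^ 2 * a₄ ^ 2)
    (hσ₃ : σ'₃ = a₁ ^ 2 * a₂ ^ 2 * a₃ ^ 2 + a₁ ^ 2 * a₂ ^ 2 * a₄ ^ 2
      + a₁ ^ 2 * a₃ ^ 2 * a₄ ^ 2 + a₂ ^ 2 * a₃ ^ 2 * a₄ ^ 2)
    (hp : p = a₁ * a₂ * a₃ * a₄)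
    (F : ℂ → ℂ → ℂ → ℂ → ℂ)
    (hF : ∀ w x y z, F w x y z =
      w * x ^ 2 - z * y ^ 2 + z ^ 3 + σ'₁ * z ^ 2 * w + σ'₂ * z * w ^ 2
        + σ'₃ * w ^ 3 - 2 * p * y * w ^ 2)
    (w x y z : ℂ)
    (hw : deriv (fun t => F t x y z) w = 0)
    (hx : deriv (fun t => F w t y z) x = 0)
    (hy : deriv (fun t => F w x t z) y = 0)
    (hz : deriv (fun t => F w x y t) z = 0) :
    w = 0 ∧ x = 0 ∧ y = 0 ∧ z = 0 := by
  -- compute the four partial derivatives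
  have hw' : x ^ 2 + σ'₁ * z ^ 2 + 2 * σ'₂ * z * w + 3 * σ'₃ * w ^ 2 - 4 * p * y * w = 0 := by
    have hfun : (fun t => F t x y z)
        = fun t => (-(z * y ^ 2) + z ^ 3) + (x ^ 2 + σ'₁ * z ^ 2) * t
          + (σ'₂ * z - 2 * p * y) * t ^ 2 + σ'₃ * t ^ 3 :=
      funext fun t => by rw [hF]; ring
    rw [hfun, deriv_cubic'] at hw
    linear_combination hw
  have hx' : w * x = 0 := by
    have hfun : (fun t => F w t y z)
        = fun t => (-(z * y ^ 2) + z ^ 3 + σ'₁ * z ^ 2 * w + σ'₂ * z * w ^ 2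
          + σ'₃ * w ^ 3 - 2 * p * y * w ^ 2) + 0 * t + w * t ^ 2 + 0 * t ^ 3 :=
      funext fun t => by rw [hF]; ring
    rw [hfun, deriv_cubic'] at hx
    linear_combination hx / 2
  have hy' : z * y + p * w ^ 2 = 0 := by
    have hfun : (fun t => F w x t z)
        = fun t => (w * x ^ 2 + z ^ 3 + σ'₁ * z ^ 2 * w + σ'₂ * z * w ^ 2
          + σ'₃ * w ^ 3) + (-(2 * p * w ^ 2)) * t + (-z) * t ^ 2 + 0 * t ^ 3 :=
      funext fun t => by rw [hF]; ring
    rw [hfun, deriv_cubic'] at hy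
    linear_combination -hy / 2
  have hz' : -y ^ 2 + 3 * z ^ 2 + 2 * σ'₁ * z * w + σ'₂ * w ^ 2 = 0 := by
    have hfun : (fun t => F w x y t)
        = fun t => (w * x ^ 2 + σ'₃ * w ^ 3 - 2 * p * y * w ^ 2)
          + (-y ^ 2 + σ'₂ * w ^ 2) * t + (σ'₁ * w) * t ^ 2 + 1 * t ^ 3 :=
      funext fun t => by rw [hF]; ring
    rw [hfun, deriv_cubic'] at hz
    linear_combination hz
  -- the value of F also vanishes (Euler's relation)
  have Feq : F w x y z = 0 := by
    rw [hF]
    linear_combination (w / 3) * hw' + (2 * x / 3) * hx' - (2 * y / 3) * hy' + (z / 3) * hz'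
  by_cases hw0 : w = 0
  · subst hw0
    have hzy : z * y = 0 := by linear_combination hy'
    have hz0 : z = 0 ∧ y = 0 := by
      rcases mul_eq_zero.mp hzy with h | h
      · subst h
        refine ⟨rfl, ?_⟩
        have : y ^ 2 = 0 := by linear_combination -hz'
        exact pow_eq_zero_iff two_ne_zero |>.mp this
      · subst h
        refine ⟨?_, rfl⟩
        have : z ^ 2 = 0 := by linear_combination hz' / 3
        exact pow_eq_zero_iff two_ne_zero |>.mp this
    obtain ⟨hz0, hy0⟩ := hz0
    subst hz0; subst hy0
    have hx0 : x = 0 := by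
      have : x ^ 2 = 0 := by linear_combination hw'
      exact pow_eq_zero_iff two_ne_zero |>.mp this
    exact ⟨rfl, hx0, rfl, rfl⟩
  · have hx0 : x = 0 := by
      rcases mul_eq_zero.mp hx' with h | h
      · exact absurd h hw0
      · exact h
    have E1 : σ'₁ * z ^ 2 + 2 * σ'₂ * z * w + 3 * σ'₃ * w ^ 2 - 4 * p * y * w = 0 := by
      rw [hx0] at hw'
      linear_combination hw'
    have key : (z + a₁ ^ 2 * w) * ((z + a₂ ^ 2 * w) * ((z + a₃ ^ 2 * w) * (z + a₄ ^ 2 * w))) = 0 := by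
      have hid : (z + a₁ ^ 2 * w) * ((z + a₂ ^ 2 * w) * ((z + a₃ ^ 2 * w) * (z + a₄ ^ 2 * w)))
          = (z * y + p * w ^ 2) ^ 2 + z * F w x y z := by
        rw [hF, hσ₁, hσ₂, hσ₃, hp, hx0]; ring
      rw [hid, hy', Feq]; ring
    -- pairwise nonvanishing of squares differences
    have hpair : ∀ i j : Fin 4, i ≠ j →
        (![a₁, a₂, a₃, a₄] j) ^ 2 - (![a₁, a₂, a₃, a₄] i) ^ 2 ≠ 0 := by
      intro i j hij
      have h := ha j i (Ne.symm hij)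
      have heq : (![a₁, a₂, a₃, a₄] j) ^ 2 - (![a₁, a₂, a₃, a₄] i) ^ 2
          = (![a₁, a₂, a₃, a₄] j - ![a₁, a₂, a₃, a₄] i)
            * (![a₁, a₂, a₃, a₄] j + ![a₁, a₂, a₃, a₄] i) := by ring
      rw [heq]
      exact mul_ne_zero h.2 h.1
    have h21 : a₂ ^ 2 - a₁ ^ 2 ≠ 0 := by simpa using hpair 0 1 (by decide)
    have h31 : a₃ ^ 2 - a₁ ^ 2 ≠ 0 := by simpa using hpair 0 2 (by decide)
    have h41 : a₄ ^ 2 - a₁ ^ 2 ≠ 0 := by simpa using hpair 0 3 (by decide)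
    have h12 : a₁ ^ 2 - a₂ ^ 2 ≠ 0 := by simpa using hpair 1 0 (by decide)
    have h32 : a₃ ^ 2 - a₂ ^ 2 ≠ 0 := by simpa using hpair 1 2 (by decide)
    have h42 : a₄ ^ 2 - a₂ ^ 2 ≠ 0 := by simpa using hpair 1 3 (by decide)
    have h13 : a₁ ^ 2 - a₃ ^ 2 ≠ 0 := by simpa using hpair 2 0 (by decide)
    have h23 : a₂ ^ 2 - a₃ ^ 2 ≠ 0 := by simpa using hpair 2 1 (by decide)
    have h43 : a₄ ^ 2 - a₃ ^ 2 ≠ 0 := by simpa using hpair 2 3 (by decide)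
    have h14 : a₁ ^ 2 - a₄ ^ 2 ≠ 0 := by simpa using hpair 3 0 (by decide)
    have h24 : a₂ ^ 2 - a₄ ^ 2 ≠ 0 := by simpa using hpair 3 1 (by decide)
    have h34 : a₃ ^ 2 - a₄ ^ 2 ≠ 0 := by simpa using hpair 3 2 (by decide)
    exfalso
    rcases mul_eq_zero.mp key with h | h
    · exact d4_aux a₁ a₂ a₃ a₄ σ'₁ σ'₂ σ'₃ p w y z
        (by linear_combination hσ₁) (by linear_combination hσ₂) (by linear_combination hσ₃) (by linear_combination hp)
        hw0 (by linear_combination h)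
        (mul_ne_zero h21 (mul_ne_zero h31 h41)) E1 hy' hz'
    rcases mul_eq_zero.mp h with h | h
    · exact d4_aux a₂ a₁ a₃ a₄ σ'₁ σ'₂ σ'₃ p w y z
        (by linear_combination hσ₁) (by linear_combination hσ₂) (by linear_combination hσ₃) (by linear_combination hp)
        hw0 (by linear_combination h)
        (mul_ne_zero h12 (mul_ne_zero h32 h42)) E1 hy' hz'
    rcases mul_eq_zero.mp h with h | h
    · exact d4_aux a₃ a₁ a₂ a₄ σ'₁ σ'₂ σ'₃ p w y z
        (by linear_combination hσ₁) (by linear_combination hσ₂) (by linear_combination hσ₃) (by linear_combination hp)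
        hw0 (by linear_combination h)
        (mul_ne_zero h13 (mul_ne_zero h23 h43)) E1 hy' hz'
    · exact d4_aux a₄ a₁ a₂ a₃ σ'₁ σ'₂ σ'₃ p w y z
        (by linear_combination hσ₁) (by linear_combination hσ₂) (by linear_combination hσ₃) (by linear_combination hp)
        hw0 (by linear_combination h)
        (mul_ne_zero h14 (mul_ne_zero h24 h34)) E1 hy' hz'
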